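/- Let 0 < a < b. For every n ∈ ℕ there exist real coefficients a₁, …, aₙ such that for all t ∈ [a,b], |1 − ∑_{k=1}^n a_k t^k| ≤ 2·((√b − √a)/(√b + √a))ⁿ. -/

import Mathlib

open Polynomial Polynomial.Chebyshev Real

private lemma T_eval_closed (x : ℝ) (hx : 1 ≤ x) (n : ℕ) :
    (T ℝ (n : ℤ)).eval x =
      ((x + Real.sqrt (x^2 - 1))^n + (x - Real.sqrt (x^2 - 1))^n) / 2 := by
  have hs : Real.sqrt (x^2-1) ^ 2 = x^2 - 1 := Real.sq_sqrt (by nlinarith)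
  induction n using Nat.twoStepInduction with
  | zero => simp
  | one => push_cast; rw [T_one]; simp
  | more n ih1 ih2 =>
    rw [show ((n+2:ℕ):ℤ) = (n:ℤ) + 2 by push_cast; ring, T_add_two]
    simp only [eval_sub, eval_mul, eval_ofNat, eval_X, ih1,
      show (((n+1:ℕ):ℤ)) = (n:ℤ)+1 by push_cast; ring] at *
    rw [ih2]
    set s := Real.sqrt (x^2-1)
    have hu : (x+s)^(n+2) = (2*x*(x+s) - 1) * (x+s)^n := by
      have h : (x+s)^2 = 2*x*(x+s) - 1 := by nlinarith [hs]
      calc (x+s)^(n+2) = (x+s)^2 * (x+s)^n := by ring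
        _ = _ := by rw [h]
    have hv : (x-s)^(n+2) = (2*x*(x-s) - 1) * (x-s)^n := by
      have h : (x-s)^2 = 2*x*(x-s) - 1 := by nlinarith [hs]
      calc (x-s)^(n+2) = (x-s)^2 * (x-s)^n := by ring
        _ = _ := by rw [h]
    rw [hu, hv]; ring

private lemma T_natDegree_le' (n : ℕ) : (T ℝ (n : ℤ)).natDegree ≤ n := by
  induction n using Nat.twoStepInduction with
  | zero => simp
  | one => push_cast; rw [T_one]; simpa using natDegree_X_le
  | more n ih1 ih2 =>
    rw [show ((n+2:ℕ):ℤ) = (n:ℤ) + 2 by push_cast; ring, T_add_two]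
    refine (natDegree_sub_le _ _).trans (max_le ?_ (ih1.trans (by omega)))
    refine (natDegree_mul_le).trans ?_
    have h1 : (2 * X : ℝ[X]).natDegree ≤ 1 := by
      refine natDegree_mul_le.trans ?_
      simpa using natDegree_X_le
    have h2 : (T ℝ ((n:ℤ)+1)).natDegree ≤ n + 1 := by
      rw [show ((n:ℤ)+1) = ((n+1:ℕ):ℤ) by push_cast; ring]; exact ih2
    omega

theorem stmt_7 (a b : ℝ) (ha : 0 < a) (hab : a < b) (n : ℕ) :
    ∃ c : ℕ → ℝ, ∀ t ∈ Set.Icc a b,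
      |1 - ∑ k ∈ Finset.Icc 1 n, c k * t ^ k| ≤
        2 * ((Real.sqrt b - Real.sqrt a) / (Real.sqrt b + Real.sqrt a)) ^ n := by
  have hba : 0 < b - a := by linarith
  set x0 : ℝ := (b + a) / (b - a) with hx0def
  have hx0 : 1 < x0 := by
    rw [hx0def, lt_div_iff₀ hba]; linarith
  have hsa : 0 < Real.sqrt a := Real.sqrt_pos.2 ha
  have hsb : 0 < Real.sqrt b := Real.sqrt_pos.2 (ha.trans hab)
  have hsab : Real.sqrt a < Real.sqrt b := Real.sqrt_lt_sqrt ha.le hab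
  have ha2 := Real.sq_sqrt ha.le
  have hb2 := Real.sq_sqrt (ha.trans hab).le
  have hx0sq : x0 ^ 2 - 1 = 4 * a * b / (b - a) ^ 2 := by
    rw [hx0def]; field_simp [hba.ne']; ring
  have hsqab : Real.sqrt (x0^2 - 1) = 2 * Real.sqrt a * Real.sqrt b / (b - a) := by
    rw [hx0sq, show (4 : ℝ) * a * b / (b-a)^2 = (2 * Real.sqrt a * Real.sqrt b / (b-a))^2 by
      field_simp; nlinarith]
    exact Real.sqrt_sq (by positivity)
  set r : ℝ := (Real.sqrt b + Real.sqrt a) / (Real.sqrt b - Real.sqrt a) with hrdef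
  have hr1 : 1 < r := by
    rw [hrdef, lt_div_iff₀ (by linarith)]; linarith
  have hur : x0 + Real.sqrt (x0^2 - 1) = r := by
    rw [hsqab, hx0def, hrdef]
    rw [div_add_div _ _ hba.ne' hba.ne', div_eq_div_iff (by positivity) (by linarith)]
    set sa := Real.sqrt a with hsadef
    set sb := Real.sqrt b with hsbdef
    rw [← ha2, ← hb2]; ring
  have hvpos : 0 ≤ x0 - Real.sqrt (x0^2-1) := by
    have h : Real.sqrt (x0^2-1) ≤ Real.sqrt (x0^2) := by
      apply Real.sqrt_le_sqrt; linarith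
    rw [Real.sqrt_sq (by linarith)] at h; linarith
  have hT0 : (T ℝ (n:ℤ)).eval x0 ≥ r ^ n / 2 := by
    rw [T_eval_closed x0 hx0.le n, hur]
    have h : 0 ≤ (x0 - Real.sqrt (x0^2-1)) ^ n := pow_nonneg hvpos n
    linarith
  have hTpos : 0 < (T ℝ (n:ℤ)).eval x0 := lt_of_lt_of_le (by positivity) hT0
  set L : ℝ[X] := Polynomial.C x0 + Polynomial.C (-2 / (b-a)) * Polynomial.X with hLdef
  set q : ℝ[X] := Polynomial.C ((T ℝ (n:ℤ)).eval x0)⁻¹ * ((T ℝ (n:ℤ)).comp L) with hqdef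
  have hLeval : ∀ t : ℝ, L.eval t = x0 - 2 * t / (b - a) := by
    intro t; simp [hLdef]; ring
  have hL0 : L.eval 0 = x0 := by rw [hLeval]; ring
  have hq0 : q.eval 0 = 1 := by
    simp [hqdef, eval_comp, hL0, inv_mul_cancel₀ hTpos.ne']
  have hqdeg : q.natDegree ≤ n := by
    refine natDegree_mul_le.trans ?_
    have h : ((T ℝ (n:ℤ)).comp L).natDegree ≤ n := by
      refine natDegree_comp_le.trans ?_
      have hLd : L.natDegree ≤ 1 := by
        refine (natDegree_add_le _ _).trans (max_le (by simp) ?_)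
        refine natDegree_mul_le.trans ?_
        simpa using natDegree_X_le
      calc (T ℝ (n:ℤ)).natDegree * L.natDegree ≤ n * 1 :=
            Nat.mul_le_mul (T_natDegree_le' n) hLd
        _ = n := by omega
    simpa using h
  refine ⟨fun k => -q.coeff k, fun t ht => ?_⟩
  have heval : 1 - ∑ k ∈ Finset.Icc 1 n, (-q.coeff k) * t ^ k = q.eval t := by
    rw [Polynomial.eval_eq_sum_range' (lt_of_le_of_lt hqdeg (Nat.lt_succ_self n))]
    have hins : Finset.range (n+1) = insert 0 (Finset.Icc 1 n) := by
      ext k; simp [Finset.mem_Icc, Nat.lt_succ_iff]; omega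
    rw [hins, Finset.sum_insert (by simp)]
    rw [Polynomial.coeff_zero_eq_eval_zero, hq0]
    have : ∑ k ∈ Finset.Icc 1 n, (-q.coeff k) * t ^ k
        = -∑ k ∈ Finset.Icc 1 n, q.coeff k * t ^ k := by
      rw [← Finset.sum_neg_distrib]; apply Finset.sum_congr rfl; intro k _; ring
    rw [this]; ring
  rw [heval]
  have hLt : L.eval t ∈ Set.Icc (-1:ℝ) 1 := by
    obtain ⟨h1, h2⟩ := ht
    rw [hLeval]
    have heq : x0 - 2 * t / (b - a) = (b + a - 2*t) / (b - a) := by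
      rw [hx0def]; field_simp
    rw [heq]
    constructor
    · rw [le_div_iff₀ hba]; linarith
    · rw [div_le_iff₀ hba]; linarith
  have hTb : |(T ℝ (n:ℤ)).eval (L.eval t)| ≤ 1 := by
    obtain ⟨θ, hθ⟩ : ∃ θ, Real.cos θ = L.eval t :=
      ⟨Real.arccos (L.eval t), Real.cos_arccos hLt.1 hLt.2⟩
    rw [← hθ, Polynomial.Chebyshev.T_real_cos]
    exact Real.abs_cos_le_one _
  have hmain : |q.eval t| ≤ 2 / r ^ n := by
    rw [hqdef]
    simp only [eval_mul, eval_C, eval_comp, abs_mul, abs_inv, abs_of_pos hTpos]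
    have h1 : ((T ℝ (n:ℤ)).eval x0)⁻¹ ≤ (r ^ n / 2)⁻¹ :=
      inv_anti₀ (by positivity) hT0
    calc ((T ℝ (n:ℤ)).eval x0)⁻¹ * |(T ℝ (n:ℤ)).eval (L.eval t)|
        ≤ (r^n/2)⁻¹ * 1 := mul_le_mul h1 hTb (abs_nonneg _) (by positivity)
      _ = 2 / r ^ n := by rw [mul_one, inv_div]
  refine hmain.trans (le_of_eq ?_)
  have hrinv : (Real.sqrt b - Real.sqrt a) / (Real.sqrt b + Real.sqrt a) = r⁻¹ := by
    rw [hrdef, inv_div]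
  rw [hrinv, inv_pow, div_eq_mul_inv]
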